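/- Let ω ∈ ℝ, C > 0, s > 1, and let g : ℝ → ℂ be continuous with |g(t)| ≤ C·(1 + |t|)^{−s} for all t ∈ ℝ. Fix h ∈ ℝ and ξ ∈ ℂ with Im ξ < ω. Then ∫_h^∞ e^{−i·x·ξ} · ((1/(2π))·∫_ℝ e^{i·x·(t + iω)}·g(t) dt) dx = (1/(2πi))·∫_ℝ e^{i·h·(t + iω − ξ)} · g(t)/(ξ − t − iω) dt, where all integrals converge absolutely. (Lemma 5.1(a): formula (fPimax) for the operator Π⁺_h = F∘1_{(h,∞)}∘F^{−1} acting on a function f whose restriction to the line Im η = ω is g, expressed as a contour integral along the line Im η = ω lying above ξ.) -/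

import Mathlib

open MeasureTheory Set

lemma aux_exp_norm (z : ℂ) : ‖Complex.exp z‖ = Real.exp z.re := Complex.norm_exp z

lemma aux_expIntOn (c : ℂ) (hc : c.re < 0) (h : ℝ) :
    IntegrableOn (fun x : ℝ => Complex.exp (c * x)) (Ioi h) := by
  have hb : (0:ℝ) < -c.re := by linarith
  refine (exp_neg_integrableOn_Ioi h hb).mono'
    (Complex.continuous_exp.comp (continuous_const.mul Complex.continuous_ofReal)).aestronglyMeasurable ?_
  filter_upwards with x
  simp [Complex.norm_exp, Complex.mul_re]

lemma aux_expInt (c : ℂ) (hc : c.re < 0) (h : ℝ) :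
    ∫ x in Ioi h, Complex.exp (c * x) = -Complex.exp (c * h) / c := by
  have hc0 : c ≠ 0 := fun h0 => by simp [h0] at hc
  have hderiv : ∀ x ∈ Ioi h, HasDerivAt (fun x : ℝ => Complex.exp (c * x) / c)
      (Complex.exp (c * x)) x := by
    intro x _
    have h1 : HasDerivAt (fun x : ℝ => c * (x : ℂ)) (c * 1) x :=
      ((hasDerivAt_id x).ofReal_comp).const_mul c
    have h2 := (h1.cexp).div_const c
    have h3 : Complex.exp (c * x) * (c * 1) / c = Complex.exp (c * x) := by field_simp
    rwa [h3] at h2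
  have htend : Filter.Tendsto (fun x : ℝ => Complex.exp (c * x) / c) Filter.atTop (nhds 0) := by
    rw [tendsto_zero_iff_norm_tendsto_zero]
    have heq : (fun x : ℝ => ‖Complex.exp (c * x) / c‖) = fun x => Real.exp (c.re * x) / ‖c‖ := by
      funext x; simp [Complex.norm_exp, Complex.mul_re]
    rw [heq]
    have h3 : Filter.Tendsto (fun x : ℝ => c.re * x) Filter.atTop Filter.atBot :=
      Filter.Tendsto.const_mul_atTop_of_neg hc Filter.tendsto_id
    simpa using (Real.tendsto_exp_atBot.comp h3).div_const ‖c‖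
  have hcont : ContinuousWithinAt (fun x : ℝ => Complex.exp (c * x) / c) (Ici h) h :=
    ((Complex.continuous_exp.comp (continuous_const.mul Complex.continuous_ofReal)).div_const c).continuousWithinAt
  have := integral_Ioi_of_hasDerivAt_of_tendsto hcont hderiv (aux_expIntOn c hc h) htend
  rw [this]; ring

/-- Lemma 5.1(a), formula (fPimax): the operator `Π⁺_h = F ∘ 1_{(h,∞)} ∘ F⁻¹` applied to a
function whose restriction to the line `Im η = ω` is `g`, expressed as a contour integral
along the line `Im η = ω` lying above `ξ`. -/
theorem stmt_11 (ω C s : ℝ) (hC : 0 < C) (hs : 1 < s) (g : ℝ → ℂ)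
    (hg : Continuous g) (hbound : ∀ t : ℝ, ‖g t‖ ≤ C * (1 + |t|) ^ (-s))
    (h : ℝ) (ξ : ℂ) (hξ : ξ.im < ω) :
    (∀ x : ℝ, Integrable (fun t : ℝ =>
        Complex.exp (Complex.I * x * ((t : ℂ) + ω * Complex.I)) * g t)) ∧
    IntegrableOn (fun x : ℝ =>
        Complex.exp (-(Complex.I * x * ξ)) *
          ((2 * (Real.pi : ℂ))⁻¹ *
            ∫ t : ℝ, Complex.exp (Complex.I * x * ((t : ℂ) + ω * Complex.I)) * g t))
      (Ioi h) ∧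
    Integrable (fun t : ℝ =>
        Complex.exp (Complex.I * h * ((t : ℂ) + ω * Complex.I - ξ)) * g t /
          (ξ - t - ω * Complex.I)) ∧
    (∫ x in Ioi h, Complex.exp (-(Complex.I * x * ξ)) *
        ((2 * (Real.pi : ℂ))⁻¹ *
          ∫ t : ℝ, Complex.exp (Complex.I * x * ((t : ℂ) + ω * Complex.I)) * g t))
      = (2 * (Real.pi : ℂ) * Complex.I)⁻¹ *
          ∫ t : ℝ, Complex.exp (Complex.I * h * ((t : ℂ) + ω * Complex.I - ξ)) * g t /
            (ξ - t - ω * Complex.I) := by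
  have hπ : (0:ℝ) < Real.pi := Real.pi_pos
  have hb : (0:ℝ) < ω - ξ.im := by linarith
  -- g is integrable
  have hgInt : Integrable g := by
    have h1 : Integrable (fun t : ℝ => C * (1 + ‖t‖) ^ (-s)) :=
      (integrable_one_add_norm (by simpa using hs)).const_mul C
    exact h1.mono' hg.aestronglyMeasurable (Filter.Eventually.of_forall fun t => by
      simpa [Real.norm_eq_abs] using hbound t)
  set M : ℝ := ∫ t : ℝ, ‖g t‖ with hM
  have hM0 : 0 ≤ M := integral_nonneg fun t => norm_nonneg _
  -- real parts of the various exponents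
  have hre1 : ∀ x t : ℝ, (Complex.I * x * ((t : ℂ) + ω * Complex.I)).re = -(x * ω) := by
    intro x t
    simp [Complex.mul_re, Complex.mul_im]
  have hre2 : ∀ x : ℝ, (-(Complex.I * x * ξ)).re = x * ξ.im := by
    intro x
    simp [Complex.mul_re, Complex.mul_im]
  have hre3 : ∀ t : ℝ, (Complex.I * h * ((t : ℂ) + ω * Complex.I - ξ)).re = h * (ξ.im - ω) := by
    intro t
    simp [Complex.mul_re, Complex.mul_im]
    ring
  -- continuity of the kernel
  have hker : Continuous fun p : ℝ × ℝ =>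
      Complex.exp (Complex.I * p.1 * ((p.2 : ℂ) + ω * Complex.I)) * g p.2 :=
    (Complex.continuous_exp.comp (by fun_prop)).mul (hg.comp continuous_snd)
  -- Part 1
  have A : ∀ x : ℝ, Integrable (fun t : ℝ =>
      Complex.exp (Complex.I * x * ((t : ℂ) + ω * Complex.I)) * g t) := by
    intro x
    refine (hgInt.norm.const_mul (Real.exp (-(x * ω)))).mono'
      (hker.comp (Continuous.prodMk_right x)).aestronglyMeasurable ?_
    filter_upwards with t
    rw [norm_mul, aux_exp_norm, hre1 x t]
  -- bound on the inner integral
  have hInner : ∀ x : ℝ, ‖∫ t : ℝ, Complex.exp (Complex.I * x * ((t : ℂ) + ω * Complex.I)) * g t‖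
      ≤ Real.exp (-(x * ω)) * M := by
    intro x
    calc ‖∫ t : ℝ, Complex.exp (Complex.I * x * ((t : ℂ) + ω * Complex.I)) * g t‖
        ≤ ∫ t : ℝ, ‖Complex.exp (Complex.I * x * ((t : ℂ) + ω * Complex.I)) * g t‖ :=
          norm_integral_le_integral_norm _
      _ = ∫ t : ℝ, Real.exp (-(x * ω)) * ‖g t‖ := by
          congr 1; funext t; rw [norm_mul, aux_exp_norm, hre1 x t]
      _ = Real.exp (-(x * ω)) * M := by rw [integral_const_mul]
  -- norm of constant
  have hnorm2π : ‖(2 * (Real.pi : ℂ))⁻¹‖ = (2 * Real.pi)⁻¹ := by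
    rw [norm_inv]
    have : (2 * (Real.pi : ℂ)) = ((2 * Real.pi : ℝ) : ℂ) := by push_cast; ring
    rw [this, Complex.norm_real, Real.norm_eq_abs, abs_of_pos (by positivity)]
  -- strong measurability of inner integral
  have hsm_inner : StronglyMeasurable (fun x : ℝ =>
      ∫ t : ℝ, Complex.exp (Complex.I * x * ((t : ℂ) + ω * Complex.I)) * g t) :=
    hker.stronglyMeasurable.integral_prod_right'
  -- Part 2
  have B : IntegrableOn (fun x : ℝ =>
      Complex.exp (-(Complex.I * x * ξ)) *
        ((2 * (Real.pi : ℂ))⁻¹ *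
          ∫ t : ℝ, Complex.exp (Complex.I * x * ((t : ℂ) + ω * Complex.I)) * g t))
      (Ioi h) := by
    refine ((exp_neg_integrableOn_Ioi h hb).const_mul ((2 * Real.pi)⁻¹ * M)).mono'
      (((Complex.continuous_exp.comp (by fun_prop)).stronglyMeasurable.mul
        (stronglyMeasurable_const.mul hsm_inner)).aestronglyMeasurable.restrict) ?_
    filter_upwards with x
    rw [norm_mul, norm_mul, aux_exp_norm, hre2 x, hnorm2π]
    calc Real.exp (x * ξ.im) * ((2 * Real.pi)⁻¹ *
          ‖∫ t : ℝ, Complex.exp (Complex.I * x * ((t : ℂ) + ω * Complex.I)) * g t‖)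
        ≤ Real.exp (x * ξ.im) * ((2 * Real.pi)⁻¹ * (Real.exp (-(x * ω)) * M)) := by
          gcongr
          exact hInner x
      _ = (2 * Real.pi)⁻¹ * M * Real.exp (-(ω - ξ.im) * x) := by
          rw [show -(ω - ξ.im) * x = x * ξ.im + -(x * ω) by ring, Real.exp_add]; ring
  -- denominator is nonzero
  have hden : ∀ t : ℝ, ξ - (t : ℂ) - ω * Complex.I ≠ 0 := by
    intro t h0
    have := congrArg Complex.im h0
    simp at this
    linarith
  have habs : ∀ t : ℝ, ω - ξ.im ≤ ‖ξ - (t : ℂ) - ω * Complex.I‖ := by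
    intro t
    have h1 := Complex.abs_im_le_norm (ξ - (t : ℂ) - ω * Complex.I)
    have h2 : (ξ - (t : ℂ) - ω * Complex.I).im = ξ.im - ω := by simp
    rw [h2] at h1
    calc ω - ξ.im = |ξ.im - ω| := by rw [abs_of_neg (by linarith)]; ring
      _ ≤ _ := h1
  -- Part 3
  have Ccont : Continuous fun t : ℝ =>
      Complex.exp (Complex.I * h * ((t : ℂ) + ω * Complex.I - ξ)) * g t /
        (ξ - t - ω * Complex.I) :=
    ((Complex.continuous_exp.comp (by fun_prop)).mul hg).div (by fun_prop) hden
  have Cpart : Integrable (fun t : ℝ =>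
      Complex.exp (Complex.I * h * ((t : ℂ) + ω * Complex.I - ξ)) * g t /
        (ξ - t - ω * Complex.I)) := by
    refine (hgInt.norm.const_mul (Real.exp (h * (ξ.im - ω)) * (ω - ξ.im)⁻¹)).mono'
      Ccont.aestronglyMeasurable ?_
    filter_upwards with t
    rw [norm_div, norm_mul, aux_exp_norm, hre3 t]
    calc Real.exp (h * (ξ.im - ω)) * ‖g t‖ / ‖ξ - (t : ℂ) - ω * Complex.I‖
        ≤ Real.exp (h * (ξ.im - ω)) * ‖g t‖ / (ω - ξ.im) :=
          div_le_div_of_nonneg_left (by positivity) hb (habs t)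
      _ = Real.exp (h * (ξ.im - ω)) * (ω - ξ.im)⁻¹ * ‖g t‖ := by
          rw [div_eq_mul_inv]; ring
  -- pointwise evaluation of the x-integral
  have key : ∀ t : ℝ, (∫ x in Ioi h, Complex.exp (-(Complex.I * x * ξ)) *
        ((2 * (Real.pi : ℂ))⁻¹ *
          (Complex.exp (Complex.I * x * ((t : ℂ) + ω * Complex.I)) * g t)))
      = (2 * (Real.pi : ℂ) * Complex.I)⁻¹ *
          (Complex.exp (Complex.I * h * ((t : ℂ) + ω * Complex.I - ξ)) * g t /
            (ξ - t - ω * Complex.I)) := by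
    intro t
    set c : ℂ := Complex.I * ((t : ℂ) + ω * Complex.I - ξ) with hc_def
    have hcre : c.re = ξ.im - ω := by
      rw [hc_def]; simp [Complex.mul_re]
    have hclt : c.re < 0 := by rw [hcre]; linarith
    have hc0 : c ≠ 0 := fun h0 => by rw [h0] at hcre; simp at hcre; linarith
    have hpt : ∀ x : ℝ, Complex.exp (-(Complex.I * x * ξ)) *
        ((2 * (Real.pi : ℂ))⁻¹ *
          (Complex.exp (Complex.I * x * ((t : ℂ) + ω * Complex.I)) * g t))
        = ((2 * (Real.pi : ℂ))⁻¹ * g t) * Complex.exp (c * x) := by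
      intro x
      have hmul : Complex.exp (-(Complex.I * x * ξ)) *
          Complex.exp (Complex.I * x * ((t : ℂ) + ω * Complex.I)) = Complex.exp (c * x) := by
        rw [← Complex.exp_add]
        congr 1
        rw [hc_def]; ring
      calc Complex.exp (-(Complex.I * x * ξ)) *
            ((2 * (Real.pi : ℂ))⁻¹ *
              (Complex.exp (Complex.I * x * ((t : ℂ) + ω * Complex.I)) * g t))
          = ((2 * (Real.pi : ℂ))⁻¹ * g t) * (Complex.exp (-(Complex.I * x * ξ)) *
              Complex.exp (Complex.I * x * ((t : ℂ) + ω * Complex.I))) := by ring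
        _ = _ := by rw [hmul]
    simp_rw [hpt]
    rw [integral_const_mul, aux_expInt c hclt h]
    have hexp : Complex.exp (c * h) =
        Complex.exp (Complex.I * h * ((t : ℂ) + ω * Complex.I - ξ)) := by
      congr 1; rw [hc_def]; ring
    have hIc : ξ - (t : ℂ) - ω * Complex.I = Complex.I * c := by
      rw [hc_def, ← mul_assoc, Complex.I_mul_I]; ring
    rw [hIc, ← hexp]
    simp only [div_eq_mul_inv, mul_inv, Complex.inv_I]
    linear_combination (-(2 * (Real.pi : ℂ))⁻¹ * g t * Complex.exp (c * (h : ℂ)) * c⁻¹) *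
      Complex.I_mul_I
  -- Fubini
  have hFcont : Continuous fun p : ℝ × ℝ =>
      Complex.exp (-(Complex.I * p.1 * ξ)) *
        ((2 * (Real.pi : ℂ))⁻¹ *
          (Complex.exp (Complex.I * p.1 * ((p.2 : ℂ) + ω * Complex.I)) * g p.2)) :=
    (Complex.continuous_exp.comp (by fun_prop)).mul (continuous_const.mul hker)
  have hF : Integrable (fun p : ℝ × ℝ =>
      Complex.exp (-(Complex.I * p.1 * ξ)) *
        ((2 * (Real.pi : ℂ))⁻¹ *
          (Complex.exp (Complex.I * p.1 * ((p.2 : ℂ) + ω * Complex.I)) * g p.2)))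
      ((volume.restrict (Ioi h)).prod volume) := by
    have hprod : Integrable (fun p : ℝ × ℝ =>
        ((2 * Real.pi)⁻¹ * Real.exp (-(ω - ξ.im) * p.1)) * ‖g p.2‖)
        ((volume.restrict (Ioi h)).prod volume) :=
      Integrable.mul_prod ((exp_neg_integrableOn_Ioi h hb).const_mul ((2 * Real.pi)⁻¹)) hgInt.norm
    refine hprod.mono' hFcont.aestronglyMeasurable ?_
    filter_upwards with p
    rw [norm_mul, norm_mul, norm_mul, aux_exp_norm, aux_exp_norm, hre2 p.1, hre1 p.1 p.2, hnorm2π]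
    rw [show -(ω - ξ.im) * p.1 = p.1 * ξ.im + -(p.1 * ω) by ring, Real.exp_add]
    exact le_of_eq (by ring)
  have swap := MeasureTheory.integral_integral_swap (μ := volume.restrict (Ioi h)) (ν := volume)
    (f := fun (x t : ℝ) => Complex.exp (-(Complex.I * x * ξ)) *
        ((2 * (Real.pi : ℂ))⁻¹ *
          (Complex.exp (Complex.I * x * ((t : ℂ) + ω * Complex.I)) * g t))) hF
  refine ⟨A, B, Cpart, ?_⟩
  calc (∫ x in Ioi h, Complex.exp (-(Complex.I * x * ξ)) *
        ((2 * (Real.pi : ℂ))⁻¹ *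
          ∫ t : ℝ, Complex.exp (Complex.I * x * ((t : ℂ) + ω * Complex.I)) * g t))
      = ∫ x in Ioi h, ∫ t : ℝ, Complex.exp (-(Complex.I * x * ξ)) *
          ((2 * (Real.pi : ℂ))⁻¹ *
            (Complex.exp (Complex.I * x * ((t : ℂ) + ω * Complex.I)) * g t)) := by
        have hx : ∀ x : ℝ, Complex.exp (-(Complex.I * x * ξ)) * ((2 * (Real.pi : ℂ))⁻¹ *
            ∫ t : ℝ, Complex.exp (Complex.I * x * ((t : ℂ) + ω * Complex.I)) * g t)
            = ∫ t : ℝ, Complex.exp (-(Complex.I * x * ξ)) * ((2 * (Real.pi : ℂ))⁻¹ *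
              (Complex.exp (Complex.I * x * ((t : ℂ) + ω * Complex.I)) * g t)) := fun x => by
          rw [integral_const_mul, integral_const_mul]
        exact integral_congr_ae (Filter.Eventually.of_forall hx)
    _ = ∫ t : ℝ, ∫ x in Ioi h, Complex.exp (-(Complex.I * x * ξ)) *
          ((2 * (Real.pi : ℂ))⁻¹ *
            (Complex.exp (Complex.I * x * ((t : ℂ) + ω * Complex.I)) * g t)) := swap
    _ = ∫ t : ℝ, (2 * (Real.pi : ℂ) * Complex.I)⁻¹ *
          (Complex.exp (Complex.I * h * ((t : ℂ) + ω * Complex.I - ξ)) * g t /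
            (ξ - t - ω * Complex.I)) :=
        integral_congr_ae (Filter.Eventually.of_forall fun t => key t)
    _ = _ := integral_const_mul _ _
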